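/- Let q be a prime power, J ⊆ Φ⁺ closed, and A, B ∈ V_J. Then either ℂO_A^r ≅ ℂO_B^r and ℂO_A^l ≅ ℂO_B^l as ℂU_J-modules, or else ℂO_A^r and ℂO_B^r (respectively ℂO_A^l and ℂO_B^l) are disjoint, i.e. they have no irreducible constituent in common, equivalently the characters they afford are orthogonal. -/

import Mathlib

open Matrix
open scoped Classical
set_option linter.unusedSectionVars false
set_option maxHeartbeats 1000000

noncomputable section

variable {F : Type} [Field F] [Fintype F] {n : ℕ}

/-- The pattern subgroup U_J ⊆ U_n(q): unitriangular matrices supported (off the diagonal)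
on J. -/
def patternU (J : Set (Fin n × Fin n)) : Set (Matrix (Fin n) (Fin n) F) :=
  {u | (∀ i, u i i = 1) ∧ ∀ i j, i ≠ j → (i, j) ∉ J → u i j = 0}

/-- V_J = {A ∈ M_n(q) : A_{ij} = 0 unless (i,j) ∈ J}. -/
def patternV (J : Set (Fin n × Fin n)) : Set (Matrix (Fin n) (Fin n) F) :=
  {A | ∀ i j, (i, j) ∉ J → A i j = 0}

/-- The natural projection π_J : M_n(q) → V_J. -/
def projJ (J : Set (Fin n × Fin n)) (B : Matrix (Fin n) (Fin n) F) :
    Matrix (Fin n) (Fin n) F :=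
  Matrix.of fun i j => if (i, j) ∈ J then B i j else 0

/-- The pairing A*(B) = Σ_{i,j} A_{ij} B_{ij}; for A supported on J this is the linear
form A* = Σ_{(i,j)∈J} A_{ij} ε_{ij} evaluated at B. -/
def dpair (A B : Matrix (Fin n) (Fin n) F) : F :=
  ∑ i, ∑ j, A i j * B i j

/-- The right orbit O_A^r = [A].U_J on the level of matrices: [A].u = [π_J(A u^{−t})]. -/
def orbR (J : Set (Fin n × Fin n)) (A : Matrix (Fin n) (Fin n) F) :
    Set (Matrix (Fin n) (Fin n) F) :=
  {B | ∃ u ∈ patternU J, B = projJ J (A * (u⁻¹)ᵀ)}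

/-- The left orbit O_A^l = U_J.[A] on the level of matrices: u.[A] = [π_J(u^{−t} A)]. -/
def orbL (J : Set (Fin n × Fin n)) (A : Matrix (Fin n) (Fin n) F) :
    Set (Matrix (Fin n) (Fin n) F) :=
  {B | ∃ u ∈ patternU J, B = projJ J ((u⁻¹)ᵀ * A)}

/-- The biorbit O_A^bi = U_J.[A].U_J on the level of matrices. -/
def orbBi (J : Set (Fin n × Fin n)) (A : Matrix (Fin n) (Fin n) F) :
    Set (Matrix (Fin n) (Fin n) F) :=
  {B | ∃ u ∈ patternU J, ∃ v ∈ patternU J, B = projJ J ((u⁻¹)ᵀ * projJ J (A * (v⁻¹)ᵀ))}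

/-- The character of U_J afforded by the monomial right orbit module ℂO_A^r (with respect to
the nontrivial character θ of (𝔽_q,+)): the trace of g on the monomial basis
{[B] : B ∈ O_A^r}, where [B]g = [B](g⁻¹ − E)·[B].g, so that the diagonal entry at [B] is
θ(B*(g⁻¹ − E)) if [B].g = [B] and 0 otherwise. -/
def rcharFn (J : Set (Fin n × Fin n)) (θ : AddChar F ℂ)
    (A g : Matrix (Fin n) (Fin n) F) : ℂ :=
  ∑ᶠ B ∈ orbR J A, if projJ J (B * (g⁻¹)ᵀ) = B then θ (dpair B (g⁻¹ - 1)) else 0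

/-- The character of U_J afforded by the monomial left orbit module ℂO_A^l. -/
def lcharFn (J : Set (Fin n × Fin n)) (θ : AddChar F ℂ)
    (A g : Matrix (Fin n) (Fin n) F) : ℂ :=
  ∑ᶠ B ∈ orbL J A, if projJ J ((g⁻¹)ᵀ * B) = B then θ (dpair B (g⁻¹ - 1)) else 0

/-- The character of U_J afforded by the biorbit span ℂO_A^bi regarded as a right
ℂU_J-module. -/
def bcharFn (J : Set (Fin n × Fin n)) (θ : AddChar F ℂ)
    (A g : Matrix (Fin n) (Fin n) F) : ℂ :=
  ∑ᶠ B ∈ orbBi J A, if projJ J (B * (g⁻¹)ᵀ) = B then θ (dpair B (g⁻¹ - 1)) else 0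

namespace Stmt11Aux

variable (J : Set (Fin n × Fin n))


lemma projJ_apply (B : Matrix (Fin n) (Fin n) F) (i j : Fin n) :
    projJ J B i j = if (i, j) ∈ J then B i j else 0 := rfl

lemma projJ_mem (B : Matrix (Fin n) (Fin n) F) : projJ J B ∈ patternV J := by
  intro i j h
  simp [projJ_apply, h]

lemma projJ_eq_self {A : Matrix (Fin n) (Fin n) F} (hA : A ∈ patternV J) :
    projJ J A = A := by
  ext i j
  by_cases h : (i, j) ∈ J
  · simp [projJ_apply, h]
  · simp [projJ_apply, h, hA i j h]

lemma projJ_sub (X Y : Matrix (Fin n) (Fin n) F) :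
    projJ J (X - Y) = projJ J X - projJ J Y := by
  ext i j
  by_cases h : (i, j) ∈ J <;> simp [projJ_apply, h]

lemma projJ_neg (X : Matrix (Fin n) (Fin n) F) :
    projJ J (-X) = - projJ J X := by
  ext i j
  by_cases h : (i, j) ∈ J <;> simp [projJ_apply, h]

lemma V_zero : (0 : Matrix (Fin n) (Fin n) F) ∈ patternV J := fun _ _ _ => rfl

lemma V_add {X Y : Matrix (Fin n) (Fin n) F} (hX : X ∈ patternV J) (hY : Y ∈ patternV J) :
    X + Y ∈ patternV J := by
  intro i j h; simp [hX i j h, hY i j h]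

lemma V_sub {X Y : Matrix (Fin n) (Fin n) F} (hX : X ∈ patternV J) (hY : Y ∈ patternV J) :
    X - Y ∈ patternV J := by
  intro i j h; simp [Matrix.sub_apply, hX i j h, hY i j h]

lemma V_mul (hcl : ∀ i j k : Fin n, (i, j) ∈ J → (j, k) ∈ J → (i, k) ∈ J)
    {X Y : Matrix (Fin n) (Fin n) F} (hX : X ∈ patternV J) (hY : Y ∈ patternV J) :
    X * Y ∈ patternV J := by
  intro i j h
  rw [Matrix.mul_apply]
  apply Finset.sum_eq_zero
  intro k _
  by_cases h1 : (i, k) ∈ J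
  · by_cases h2 : (k, j) ∈ J
    · exact absurd (hcl i k j h1 h2) h
    · rw [hY k j h2, mul_zero]
  · rw [hX i k h1, zero_mul]

lemma V_neg {X : Matrix (Fin n) (Fin n) F} (hX : X ∈ patternV J) : -X ∈ patternV J := by
  intro i j h; simp [hX i j h]

lemma diag_not_mem (hΦ : ∀ p ∈ J, p.1 < p.2) (i : Fin n) : (i, i) ∉ J :=
  fun h => lt_irrefl _ (hΦ _ h)

lemma mem_U_iff_sub (hΦ : ∀ p ∈ J, p.1 < p.2) {u : Matrix (Fin n) (Fin n) F} :
    u ∈ patternU J ↔ u - 1 ∈ patternV J := by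
  constructor
  · rintro ⟨h1, h2⟩ i j hij
    by_cases hij' : i = j
    · subst hij'; simp [Matrix.sub_apply, h1 i]
    · simp [Matrix.sub_apply, h2 i j hij' hij, Matrix.one_apply_ne hij']
  · intro h
    constructor
    · intro i
      have := h i i (diag_not_mem J hΦ i)
      simpa [Matrix.sub_apply] using sub_eq_zero.mp this
    · intro i j hne hij
      have := h i j hij
      simpa [Matrix.sub_apply, Matrix.one_apply_ne hne] using sub_eq_zero.mp this

lemma one_mem_U (hΦ : ∀ p ∈ J, p.1 < p.2) : (1 : Matrix (Fin n) (Fin n) F) ∈ patternU J := by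
  rw [mem_U_iff_sub J hΦ]
  simp only [sub_self]
  exact fun _ _ _ => rfl

lemma U_mul (hΦ : ∀ p ∈ J, p.1 < p.2)
    (hcl : ∀ i j k : Fin n, (i, j) ∈ J → (j, k) ∈ J → (i, k) ∈ J)
    {u v : Matrix (Fin n) (Fin n) F} (hu : u ∈ patternU J) (hv : v ∈ patternU J) :
    u * v ∈ patternU J := by
  rw [mem_U_iff_sub J hΦ] at hu hv ⊢
  have h : u * v - 1 = (u - 1) * (v - 1) + (u - 1) + (v - 1) := by noncomm_ring
  rw [h]
  intro i j hij
  simp [Matrix.add_apply, V_mul J hcl hu hv i j hij, hu i j hij, hv i j hij]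

lemma V_strict (hΦ : ∀ p ∈ J, p.1 < p.2) {N : Matrix (Fin n) (Fin n) F}
    (hN : N ∈ patternV J) {i j : Fin n} (h : ¬ i < j) : N i j = 0 :=
  hN i j (fun hm => h (hΦ _ hm))

lemma pow_entry_zero (hΦ : ∀ p ∈ J, p.1 < p.2) {N : Matrix (Fin n) (Fin n) F}
    (hN : N ∈ patternV J) :
    ∀ (k : ℕ) (i j : Fin n), (j : ℕ) < k + (i : ℕ) → (N ^ k) i j = 0 := by
  intro k
  induction k with
  | zero =>
    intro i j h
    have hne : i ≠ j := by
      intro e; subst e; omega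
    rw [pow_zero]
    exact Matrix.one_apply_ne hne
  | succ k ih =>
    intro i j h
    rw [pow_succ', Matrix.mul_apply]
    apply Finset.sum_eq_zero
    intro m _
    by_cases him : i < m
    · rw [ih m j (by have := him; rw [Fin.lt_def] at this; omega), mul_zero]
    · rw [V_strict J hΦ hN him, zero_mul]

lemma nilpotent (hΦ : ∀ p ∈ J, p.1 < p.2) {N : Matrix (Fin n) (Fin n) F}
    (hN : N ∈ patternV J) : N ^ n = 0 := by
  ext i j
  rw [Matrix.zero_apply]
  exact pow_entry_zero J hΦ hN n i j (by omega)

lemma V_pow (hcl : ∀ i j k : Fin n, (i, j) ∈ J → (j, k) ∈ J → (i, k) ∈ J)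
    {N : Matrix (Fin n) (Fin n) F} (hN : N ∈ patternV J) :
    ∀ k : ℕ, N ^ (k + 1) ∈ patternV J := by
  intro k
  induction k with
  | zero => simpa using hN
  | succ k ih => rw [pow_succ]; exact V_mul J hcl ih hN

lemma geom_mem_U (hΦ : ∀ p ∈ J, p.1 < p.2)
    (hcl : ∀ i j k : Fin n, (i, j) ∈ J → (j, k) ∈ J → (i, k) ∈ J)
    {x : Matrix (Fin n) (Fin n) F} (hx : x ∈ patternV J) :
    (∑ i ∈ Finset.range n, x ^ i) ∈ patternU J := by
  rw [mem_U_iff_sub J hΦ]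
  cases n with
  | zero => intro i j _; exact i.elim0
  | succ m =>
    have h : (∑ i ∈ Finset.range (m + 1), x ^ i) - 1 = ∑ i ∈ Finset.range m, x ^ (i + 1) := by
      rw [Finset.sum_range_succ']
      simp
    rw [h]
    intro i j hij
    rw [Matrix.sum_apply]
    apply Finset.sum_eq_zero
    intro k _
    exact V_pow J hcl hx k i j hij

lemma U_inv (hΦ : ∀ p ∈ J, p.1 < p.2)
    (hcl : ∀ i j k : Fin n, (i, j) ∈ J → (j, k) ∈ J → (i, k) ∈ J)
    {u : Matrix (Fin n) (Fin n) F} (hu : u ∈ patternU J) :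
    u⁻¹ ∈ patternU J ∧ u * u⁻¹ = 1 ∧ u⁻¹ * u = 1 := by
  have hN : u - 1 ∈ patternV J := (mem_U_iff_sub J hΦ).1 hu
  set x : Matrix (Fin n) (Fin n) F := -(u - 1) with hxdef
  have hx : x ∈ patternV J := V_neg J hN
  set w : Matrix (Fin n) (Fin n) F := ∑ i ∈ Finset.range n, x ^ i with hwdef
  have hxn : x ^ n = 0 := nilpotent J hΦ hx
  have hxu : x - 1 = -u := by rw [hxdef]; noncomm_ring
  have hwu : w * u = 1 := by
    have h1 := geom_sum_mul x n
    rw [hxn, hxu] at h1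
    have h2 : -(w * u) = -1 := by
      rw [mul_neg, ← hwdef] at h1
      rw [h1]; noncomm_ring
    exact neg_inj.mp h2
  have huw : u * w = 1 := by
    have h1 := mul_geom_sum x n
    rw [hxn, hxu] at h1
    have h2 : -(u * w) = -1 := by
      rw [neg_mul, ← hwdef] at h1
      rw [h1]; noncomm_ring
    exact neg_inj.mp h2
  have hinv : u⁻¹ = w := Matrix.inv_eq_right_inv huw
  refine ⟨?_, ?_, ?_⟩
  · rw [hinv]; exact geom_mem_U J hΦ hcl hx
  · rw [hinv]; exact huw
  · rw [hinv]; exact hwu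

lemma U_inv_mem (hΦ : ∀ p ∈ J, p.1 < p.2)
    (hcl : ∀ i j k : Fin n, (i, j) ∈ J → (j, k) ∈ J → (i, k) ∈ J)
    {u : Matrix (Fin n) (Fin n) F} (hu : u ∈ patternU J) : u⁻¹ ∈ patternU J :=
  (U_inv J hΦ hcl hu).1

lemma U_mul_inv (hΦ : ∀ p ∈ J, p.1 < p.2)
    (hcl : ∀ i j k : Fin n, (i, j) ∈ J → (j, k) ∈ J → (i, k) ∈ J)
    {u : Matrix (Fin n) (Fin n) F} (hu : u ∈ patternU J) : u * u⁻¹ = 1 :=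
  (U_inv J hΦ hcl hu).2.1

lemma U_inv_mul (hΦ : ∀ p ∈ J, p.1 < p.2)
    (hcl : ∀ i j k : Fin n, (i, j) ∈ J → (j, k) ∈ J → (i, k) ∈ J)
    {u : Matrix (Fin n) (Fin n) F} (hu : u ∈ patternU J) : u⁻¹ * u = 1 :=
  (U_inv J hΦ hcl hu).2.2

lemma U_inv_inv (hΦ : ∀ p ∈ J, p.1 < p.2)
    (hcl : ∀ i j k : Fin n, (i, j) ∈ J → (j, k) ∈ J → (i, k) ∈ J)
    {u : Matrix (Fin n) (Fin n) F} (hu : u ∈ patternU J) : (u⁻¹)⁻¹ = u :=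
  Matrix.inv_eq_right_inv (U_inv_mul J hΦ hcl hu)


lemma dpair_eq_trace (A B : Matrix (Fin n) (Fin n) F) :
    dpair A B = Matrix.trace (Aᵀ * B) := by
  unfold dpair Matrix.trace
  simp only [Matrix.diag_apply, Matrix.mul_apply, Matrix.transpose_apply]
  rw [Finset.sum_comm]

lemma dpair_sub_left (X Y Z : Matrix (Fin n) (Fin n) F) :
    dpair (X - Y) Z = dpair X Z - dpair Y Z := by
  unfold dpair
  rw [← Finset.sum_sub_distrib]
  apply Finset.sum_congr rfl
  intro i _
  rw [← Finset.sum_sub_distrib]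
  apply Finset.sum_congr rfl
  intro j _
  simp [Matrix.sub_apply, sub_mul]

lemma dpair_neg_left (X Z : Matrix (Fin n) (Fin n) F) :
    dpair (-X) Z = - dpair X Z := by
  unfold dpair
  rw [← Finset.sum_neg_distrib]
  apply Finset.sum_congr rfl
  intro i _
  rw [← Finset.sum_neg_distrib]
  apply Finset.sum_congr rfl
  intro j _
  simp

lemma dpair_add_right (X Y Z : Matrix (Fin n) (Fin n) F) :
    dpair X (Y + Z) = dpair X Y + dpair X Z := by
  unfold dpair
  rw [← Finset.sum_add_distrib]
  apply Finset.sum_congr rfl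
  intro i _
  rw [← Finset.sum_add_distrib]
  apply Finset.sum_congr rfl
  intro j _
  simp [Matrix.add_apply, mul_add]

lemma dpair_zero_left (Z : Matrix (Fin n) (Fin n) F) : dpair 0 Z = 0 := by
  unfold dpair; simp

lemma dpair_projJ_left (M N : Matrix (Fin n) (Fin n) F) (hN : N ∈ patternV J) :
    dpair (projJ J M) N = dpair M N := by
  unfold dpair
  apply Finset.sum_congr rfl
  intro i _
  apply Finset.sum_congr rfl
  intro j _
  by_cases h : (i, j) ∈ J
  · rw [projJ_apply, if_pos h]
  · rw [hN i j h, mul_zero, mul_zero]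

lemma KR_l (C Y u : Matrix (Fin n) (Fin n) F) :
    dpair ((u⁻¹)ᵀ * C) Y = dpair C Y + dpair (C * Yᵀ) (u⁻¹ - 1) := by
  rw [dpair_eq_trace, dpair_eq_trace, dpair_eq_trace]
  rw [Matrix.transpose_mul, Matrix.transpose_transpose, Matrix.transpose_mul,
    Matrix.transpose_transpose]
  rw [← Matrix.trace_mul_cycle Cᵀ (u⁻¹ - 1) Y]
  rw [← Matrix.trace_add]
  congr 1
  noncomm_ring

lemma KR_r (C Y v : Matrix (Fin n) (Fin n) F) :
    dpair (C * (v⁻¹)ᵀ) Y = dpair C Y + dpair (Yᵀ * C) (v⁻¹ - 1) := by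
  rw [dpair_eq_trace, dpair_eq_trace, dpair_eq_trace]
  rw [Matrix.transpose_mul, Matrix.transpose_transpose, Matrix.transpose_mul,
    Matrix.transpose_transpose]
  rw [Matrix.trace_mul_cycle Cᵀ Y (v⁻¹ - 1)]
  rw [← Matrix.trace_add]
  congr 1
  noncomm_ring

lemma absorb_r (hcl : ∀ i j k : Fin n, (i, j) ∈ J → (j, k) ∈ J → (i, k) ∈ J)
    {v : Matrix (Fin n) (Fin n) F} (hv : v ∈ patternU J) (X : Matrix (Fin n) (Fin n) F) :
    projJ J (projJ J X * vᵀ) = projJ J (X * vᵀ) := by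
  ext i j
  by_cases h : (i, j) ∈ J
  · rw [projJ_apply, projJ_apply, if_pos h, if_pos h, Matrix.mul_apply, Matrix.mul_apply]
    apply Finset.sum_congr rfl
    intro k _
    by_cases hik : (i, k) ∈ J
    · rw [projJ_apply, if_pos hik]
    · rw [projJ_apply, if_neg hik, zero_mul]
      have hkj : k ≠ j := by rintro rfl; exact hik h
      have hjk : (j, k) ∉ J := fun hm => hik (hcl i j k h hm)
      rw [Matrix.transpose_apply, hv.2 j k (Ne.symm hkj) hjk, mul_zero]
  · rw [projJ_apply, projJ_apply, if_neg h, if_neg h]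

lemma absorb_l (hcl : ∀ i j k : Fin n, (i, j) ∈ J → (j, k) ∈ J → (i, k) ∈ J)
    {u : Matrix (Fin n) (Fin n) F} (hu : u ∈ patternU J) (X : Matrix (Fin n) (Fin n) F) :
    projJ J (uᵀ * projJ J X) = projJ J (uᵀ * X) := by
  ext i j
  by_cases h : (i, j) ∈ J
  · rw [projJ_apply, projJ_apply, if_pos h, if_pos h, Matrix.mul_apply, Matrix.mul_apply]
    apply Finset.sum_congr rfl
    intro k _
    by_cases hkj : (k, j) ∈ J
    · rw [projJ_apply, if_pos hkj]
    · rw [projJ_apply, if_neg hkj, mul_zero]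
      have hki : k ≠ i := by rintro rfl; exact hkj h
      have hkiJ : (k, i) ∉ J := fun hm => hkj (hcl k i j hm h)
      rw [Matrix.transpose_apply, hu.2 k i hki hkiJ, zero_mul]
  · rw [projJ_apply, projJ_apply, if_neg h, if_neg h]




def rAct (J : Set (Fin n × Fin n)) (A u : Matrix (Fin n) (Fin n) F) :
    Matrix (Fin n) (Fin n) F :=
  projJ J (A * (u⁻¹)ᵀ)

def lAct (J : Set (Fin n × Fin n)) (u A : Matrix (Fin n) (Fin n) F) :
    Matrix (Fin n) (Fin n) F :=
  projJ J ((u⁻¹)ᵀ * A)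

variable {J} in
lemma rAct_mem_V {A u : Matrix (Fin n) (Fin n) F} : rAct J A u ∈ patternV J := projJ_mem J _

variable {J} in
lemma lAct_mem_V {u A : Matrix (Fin n) (Fin n) F} : lAct J u A ∈ patternV J := projJ_mem J _

lemma rAct_one {A : Matrix (Fin n) (Fin n) F} (hA : A ∈ patternV J) : rAct J A 1 = A := by
  unfold rAct
  rw [inv_one, Matrix.transpose_one, mul_one, projJ_eq_self J hA]

lemma lAct_one {A : Matrix (Fin n) (Fin n) F} (hA : A ∈ patternV J) : lAct J 1 A = A := by
  unfold lAct
  rw [inv_one, Matrix.transpose_one, one_mul, projJ_eq_self J hA]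

lemma rAct_comp (hΦ : ∀ p ∈ J, p.1 < p.2)
    (hcl : ∀ i j k : Fin n, (i, j) ∈ J → (j, k) ∈ J → (i, k) ∈ J)
    (A : Matrix (Fin n) (Fin n) F) {u v : Matrix (Fin n) (Fin n) F}
    (hu : u ∈ patternU J) (hv : v ∈ patternU J) :
    rAct J (rAct J A u) v = rAct J A (u * v) := by
  unfold rAct
  rw [absorb_r J hcl (U_inv_mem J hΦ hcl hv) (A * (u⁻¹)ᵀ)]
  rw [Matrix.mul_inv_rev, Matrix.transpose_mul, ← Matrix.mul_assoc]

lemma lAct_comp (hΦ : ∀ p ∈ J, p.1 < p.2)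
    (hcl : ∀ i j k : Fin n, (i, j) ∈ J → (j, k) ∈ J → (i, k) ∈ J)
    (A : Matrix (Fin n) (Fin n) F) {u v : Matrix (Fin n) (Fin n) F}
    (hu : u ∈ patternU J) (hv : v ∈ patternU J) :
    lAct J u (lAct J v A) = lAct J (u * v) A := by
  unfold lAct
  rw [absorb_l J hcl (U_inv_mem J hΦ hcl hu) ((v⁻¹)ᵀ * A)]
  rw [Matrix.mul_inv_rev, Matrix.transpose_mul, ← Matrix.mul_assoc]

lemma lAct_rAct_comm (hΦ : ∀ p ∈ J, p.1 < p.2)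
    (hcl : ∀ i j k : Fin n, (i, j) ∈ J → (j, k) ∈ J → (i, k) ∈ J)
    (A : Matrix (Fin n) (Fin n) F) {u v : Matrix (Fin n) (Fin n) F}
    (hu : u ∈ patternU J) (hv : v ∈ patternU J) :
    lAct J u (rAct J A v) = rAct J (lAct J u A) v := by
  unfold lAct rAct
  rw [absorb_l J hcl (U_inv_mem J hΦ hcl hu) (A * (v⁻¹)ᵀ)]
  rw [absorb_r J hcl (U_inv_mem J hΦ hcl hv) ((u⁻¹)ᵀ * A)]
  rw [Matrix.mul_assoc]

lemma lAct_cancel (hΦ : ∀ p ∈ J, p.1 < p.2)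
    (hcl : ∀ i j k : Fin n, (i, j) ∈ J → (j, k) ∈ J → (i, k) ∈ J)
    {A : Matrix (Fin n) (Fin n) F} (hA : A ∈ patternV J)
    {u : Matrix (Fin n) (Fin n) F} (hu : u ∈ patternU J) :
    lAct J u⁻¹ (lAct J u A) = A := by
  rw [lAct_comp J hΦ hcl A (U_inv_mem J hΦ hcl hu) hu, U_inv_mul J hΦ hcl hu, lAct_one J hA]

lemma lAct_cancel' (hΦ : ∀ p ∈ J, p.1 < p.2)
    (hcl : ∀ i j k : Fin n, (i, j) ∈ J → (j, k) ∈ J → (i, k) ∈ J)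
    {A : Matrix (Fin n) (Fin n) F} (hA : A ∈ patternV J)
    {u : Matrix (Fin n) (Fin n) F} (hu : u ∈ patternU J) :
    lAct J u (lAct J u⁻¹ A) = A := by
  rw [lAct_comp J hΦ hcl A hu (U_inv_mem J hΦ hcl hu), U_mul_inv J hΦ hcl hu, lAct_one J hA]

lemma rAct_cancel (hΦ : ∀ p ∈ J, p.1 < p.2)
    (hcl : ∀ i j k : Fin n, (i, j) ∈ J → (j, k) ∈ J → (i, k) ∈ J)
    {A : Matrix (Fin n) (Fin n) F} (hA : A ∈ patternV J)
    {u : Matrix (Fin n) (Fin n) F} (hu : u ∈ patternU J) :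
    rAct J (rAct J A u) u⁻¹ = A := by
  rw [rAct_comp J hΦ hcl A hu (U_inv_mem J hΦ hcl hu), U_mul_inv J hΦ hcl hu, rAct_one J hA]

lemma mem_orbR_iff {A B : Matrix (Fin n) (Fin n) F} :
    B ∈ orbR J A ↔ ∃ u ∈ patternU J, B = rAct J A u := Iff.rfl

lemma mem_orbL_iff {A B : Matrix (Fin n) (Fin n) F} :
    B ∈ orbL J A ↔ ∃ u ∈ patternU J, B = lAct J u A := Iff.rfl

lemma mem_orbBi_iff {A B : Matrix (Fin n) (Fin n) F} :
    B ∈ orbBi J A ↔ ∃ u ∈ patternU J, ∃ v ∈ patternU J, B = lAct J u (rAct J A v) := Iff.rfl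

lemma orbR_subset_V {A : Matrix (Fin n) (Fin n) F} {B : Matrix (Fin n) (Fin n) F}
    (hB : B ∈ orbR J A) : B ∈ patternV J := by
  obtain ⟨u, hu, rfl⟩ := hB
  exact projJ_mem J _

lemma orbL_subset_V {A : Matrix (Fin n) (Fin n) F} {B : Matrix (Fin n) (Fin n) F}
    (hB : B ∈ orbL J A) : B ∈ patternV J := by
  obtain ⟨u, hu, rfl⟩ := hB
  exact projJ_mem J _

lemma orbR_eq_of_mem (hΦ : ∀ p ∈ J, p.1 < p.2)
    (hcl : ∀ i j k : Fin n, (i, j) ∈ J → (j, k) ∈ J → (i, k) ∈ J)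
    {A C : Matrix (Fin n) (Fin n) F} (hC : C ∈ orbR J A) : orbR J C = orbR J A := by
  obtain ⟨u, hu, rfl⟩ := hC
  ext B
  constructor
  · rintro ⟨v, hv, rfl⟩
    refine ⟨u * v, U_mul J hΦ hcl hu hv, ?_⟩
    show rAct J (rAct J A u) v = rAct J A (u * v)
    exact rAct_comp J hΦ hcl A hu hv
  · rintro ⟨w, hw, rfl⟩
    refine ⟨u⁻¹ * w, U_mul J hΦ hcl (U_inv_mem J hΦ hcl hu) hw, ?_⟩
    show rAct J A w = rAct J (rAct J A u) (u⁻¹ * w)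
    rw [rAct_comp J hΦ hcl A hu (U_mul J hΦ hcl (U_inv_mem J hΦ hcl hu) hw)]
    rw [← Matrix.mul_assoc, U_mul_inv J hΦ hcl hu, Matrix.one_mul]

lemma orbL_eq_of_mem (hΦ : ∀ p ∈ J, p.1 < p.2)
    (hcl : ∀ i j k : Fin n, (i, j) ∈ J → (j, k) ∈ J → (i, k) ∈ J)
    {A C : Matrix (Fin n) (Fin n) F} (hC : C ∈ orbL J A) : orbL J C = orbL J A := by
  obtain ⟨u, hu, rfl⟩ := hC
  ext B
  constructor
  · rintro ⟨v, hv, rfl⟩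
    refine ⟨v * u, U_mul J hΦ hcl hv hu, ?_⟩
    show lAct J v (lAct J u A) = lAct J (v * u) A
    exact lAct_comp J hΦ hcl A hv hu
  · rintro ⟨w, hw, rfl⟩
    refine ⟨w * u⁻¹, U_mul J hΦ hcl hw (U_inv_mem J hΦ hcl hu), ?_⟩
    show lAct J w A = lAct J (w * u⁻¹) (lAct J u A)
    rw [lAct_comp J hΦ hcl A (U_mul J hΦ hcl hw (U_inv_mem J hΦ hcl hu)) hu]
    rw [Matrix.mul_assoc, U_inv_mul J hΦ hcl hu, Matrix.mul_one]

lemma lAct_mem_orbBi (hΦ : ∀ p ∈ J, p.1 < p.2)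
    (hcl : ∀ i j k : Fin n, (i, j) ∈ J → (j, k) ∈ J → (i, k) ∈ J)
    {A C u : Matrix (Fin n) (Fin n) F} (hC : C ∈ orbR J A) (hu : u ∈ patternU J) :
    lAct J u C ∈ orbBi J A := by
  obtain ⟨v, hv, rfl⟩ := hC
  exact ⟨u, hu, v, hv, rfl⟩

lemma rAct_mem_orbBi (hΦ : ∀ p ∈ J, p.1 < p.2)
    (hcl : ∀ i j k : Fin n, (i, j) ∈ J → (j, k) ∈ J → (i, k) ∈ J)
    {A C v : Matrix (Fin n) (Fin n) F} (hC : C ∈ orbL J A) (hv : v ∈ patternU J) :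
    rAct J C v ∈ orbBi J A := by
  obtain ⟨u, hu, rfl⟩ := hC
  show rAct J (lAct J u A) v ∈ orbBi J A
  rw [← lAct_rAct_comm J hΦ hcl A hu hv]
  exact ⟨u, hu, v, hv, rfl⟩

def UFin (J : Set (Fin n × Fin n)) : Finset (Matrix (Fin n) (Fin n) F) :=
  (Set.toFinite (patternU J)).toFinset

def VFin (J : Set (Fin n × Fin n)) : Finset (Matrix (Fin n) (Fin n) F) :=
  (Set.toFinite (patternV J)).toFinset

lemma mem_UFin {u : Matrix (Fin n) (Fin n) F} : u ∈ UFin J ↔ u ∈ patternU J :=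
  Set.Finite.mem_toFinset _

lemma mem_VFin {N : Matrix (Fin n) (Fin n) F} : N ∈ VFin J ↔ N ∈ patternV J :=
  Set.Finite.mem_toFinset _

lemma VFin_card_ne_zero : ((VFin J (F := F) (n := n)).card : ℂ) ≠ 0 := by
  have h : (0 : Matrix (Fin n) (Fin n) F) ∈ VFin J := (mem_VFin J).2 (fun _ _ _ => rfl)
  have : (VFin J (F := F) (n := n)).card ≠ 0 := Finset.card_ne_zero_of_mem h
  exact_mod_cast Nat.cast_ne_zero.mpr this

/-- Reindexing `u ↦ u⁻¹ - 1` turns a sum over `U_J` into a sum over `V_J`. -/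
lemma sum_U_inv_sub (hΦ : ∀ p ∈ J, p.1 < p.2)
    (hcl : ∀ i j k : Fin n, (i, j) ∈ J → (j, k) ∈ J → (i, k) ∈ J)
    (h : Matrix (Fin n) (Fin n) F → ℂ) :
    ∑ u ∈ UFin J, h (u⁻¹ - 1) = ∑ N ∈ VFin J, h N := by
  apply Finset.sum_nbij' (i := fun u => u⁻¹ - 1) (j := fun N => (N + 1)⁻¹)
  · intro a ha
    rw [mem_VFin]
    exact (mem_U_iff_sub J hΦ).1 (U_inv_mem J hΦ hcl ((mem_UFin J).1 ha))
  · intro N hN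
    rw [mem_UFin]
    have hN1 : N + 1 ∈ patternU J := by
      rw [mem_U_iff_sub J hΦ]
      simpa using (mem_VFin J).1 hN
    exact U_inv_mem J hΦ hcl hN1
  · intro a ha
    have ha' := (mem_UFin J).1 ha
    rw [sub_add_cancel, U_inv_inv J hΦ hcl ha']
  · intro N hN
    have hN1 : N + 1 ∈ patternU J := by
      rw [mem_U_iff_sub J hΦ]
      simpa using (mem_VFin J).1 hN
    rw [U_inv_inv J hΦ hcl hN1, add_sub_cancel_right]
  · intro a ha
    rfl

/-- The basic character sum over `V_J`. -/
lemma sum_theta (θ : AddChar F ℂ) (hθ : θ ≠ 1) (M : Matrix (Fin n) (Fin n) F) :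
    ∑ N ∈ VFin J, θ (dpair M N) = if projJ J M = 0 then ((VFin J (F := F)).card : ℂ) else 0 := by
  have key : ∀ N ∈ VFin J, dpair M N = dpair (projJ J M) N := by
    intro N hN
    exact (dpair_projJ_left J M N ((mem_VFin J).1 hN)).symm
  by_cases h : projJ J M = 0
  · rw [if_pos h]
    rw [Finset.sum_congr rfl (fun N hN => by rw [key N hN, h, dpair_zero_left, AddChar.map_zero_eq_one])]
    simp
  · rw [if_neg h]
    -- find a nonzero entry of projJ M; it lies in J
    have hex : ∃ i j, projJ J M i j ≠ 0 := by
      by_contra hcon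
      push_neg at hcon
      exact h (by ext i j; simpa using hcon i j)
    obtain ⟨i0, j0, hij0⟩ := hex
    have hJ0 : (i0, j0) ∈ J := by
      by_contra hc
      exact hij0 (by rw [projJ_apply, if_neg hc])
    have hM0 : M i0 j0 ≠ 0 := by
      rw [projJ_apply, if_pos hJ0] at hij0
      exact hij0
    obtain ⟨s, hs⟩ := AddChar.ne_one_iff.1 hθ
    set t : F := s / M i0 j0 with ht
    set N0 : Matrix (Fin n) (Fin n) F := Matrix.of fun i j => if i = i0 ∧ j = j0 then t else 0
      with hN0
    have hN0V : N0 ∈ patternV J := by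
      intro i j hij
      rw [hN0]
      show (if i = i0 ∧ j = j0 then t else 0) = 0
      split_ifs with hc
      · exfalso; exact hij (by rw [hc.1, hc.2]; exact hJ0)
      · rfl
    have hdp : dpair M N0 = s := by
      unfold dpair
      rw [Finset.sum_eq_single i0]
      · rw [Finset.sum_eq_single j0]
        · show M i0 j0 * (if i0 = i0 ∧ j0 = j0 then t else 0) = s
          rw [if_pos ⟨rfl, rfl⟩, ht, mul_div_cancel₀ s hM0]
        · intro j _ hj
          show M i0 j * (if i0 = i0 ∧ j = j0 then t else 0) = 0
          rw [if_neg (fun hc => hj hc.2), mul_zero]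
        · intro habs; exact absurd (Finset.mem_univ j0) habs
      · intro i _ hi
        apply Finset.sum_eq_zero
        intro j _
        show M i j * (if i = i0 ∧ j = j0 then t else 0) = 0
        rw [if_neg (fun hc => hi hc.1), mul_zero]
      · intro habs; exact absurd (Finset.mem_univ i0) habs
    -- translation invariance
    have htrans : ∑ N ∈ VFin J, θ (dpair M N) = ∑ N ∈ VFin J, θ (dpair M (N + N0)) := by
      apply Finset.sum_nbij' (i := fun N => N - N0) (j := fun N => N + N0)
      · intro a ha
        rw [mem_VFin]
        exact V_sub J ((mem_VFin J).1 ha) hN0V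
      · intro a ha
        rw [mem_VFin]
        exact V_add J ((mem_VFin J).1 ha) hN0V
      · intro a _; rw [sub_add_cancel]
      · intro a _; rw [add_sub_cancel_right]
      · intro a _; rw [sub_add_cancel]
    have hsplit : ∑ N ∈ VFin J, θ (dpair M (N + N0))
        = (∑ N ∈ VFin J, θ (dpair M N)) * θ s := by
      rw [Finset.sum_mul]
      apply Finset.sum_congr rfl
      intro N _
      rw [dpair_add_right, AddChar.map_add_eq_mul, hdp]
    have : (∑ N ∈ VFin J, θ (dpair M N)) * (θ s - 1) = 0 := by
      rw [mul_sub, mul_one, sub_eq_zero]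
      rw [← hsplit]
      exact htrans.symm
    rcases mul_eq_zero.mp this with h1 | h2
    · exact h1
    · exact absurd (sub_eq_zero.mp h2) hs

lemma inner_sum_r (hΦ : ∀ p ∈ J, p.1 < p.2)
    (hcl : ∀ i j k : Fin n, (i, j) ∈ J → (j, k) ∈ J → (i, k) ∈ J)
    (θ : AddChar F ℂ) (hθ : θ ≠ 1)
    {C g : Matrix (Fin n) (Fin n) F} (hC : C ∈ patternV J) (hg : g ∈ patternU J) :
    ∑ u ∈ UFin J, θ (dpair (lAct J u C) (g⁻¹ - 1))
      = ((VFin J (F := F)).card : ℂ) *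
        (if projJ J (C * (g⁻¹)ᵀ) = C then θ (dpair C (g⁻¹ - 1)) else 0) := by
  have hgi : g⁻¹ ∈ patternU J := U_inv_mem J hΦ hcl hg
  have hY : g⁻¹ - 1 ∈ patternV J := (mem_U_iff_sub J hΦ).1 hgi
  have hstep : ∀ u : Matrix (Fin n) (Fin n) F,
      θ (dpair (lAct J u C) (g⁻¹ - 1))
        = θ (dpair C (g⁻¹ - 1)) * θ (dpair (C * (g⁻¹ - 1)ᵀ) (u⁻¹ - 1)) := by
    intro u
    rw [← AddChar.map_add_eq_mul]
    congr 1
    rw [lAct, dpair_projJ_left J _ _ hY, KR_l]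
  rw [Finset.sum_congr rfl (fun u _ => hstep u), ← Finset.mul_sum]
  have hre : ∑ u ∈ UFin J, θ (dpair (C * (g⁻¹ - 1)ᵀ) (u⁻¹ - 1))
      = ∑ N ∈ VFin J, θ (dpair (C * (g⁻¹ - 1)ᵀ) N) :=
    sum_U_inv_sub J hΦ hcl (fun N => θ (dpair (C * (g⁻¹ - 1)ᵀ) N))
  rw [hre, sum_theta J θ hθ]
  have hcond : (projJ J (C * (g⁻¹ - 1)ᵀ) = 0) ↔ (projJ J (C * (g⁻¹)ᵀ) = C) := by
    have hexp : C * (g⁻¹ - 1)ᵀ = C * (g⁻¹)ᵀ - C := by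
      rw [Matrix.transpose_sub, Matrix.transpose_one, Matrix.mul_sub, Matrix.mul_one]
    rw [hexp, projJ_sub, projJ_eq_self J hC, sub_eq_zero]
  by_cases hc : projJ J (C * (g⁻¹)ᵀ) = C
  · rw [if_pos (hcond.2 hc), if_pos hc]; ring
  · rw [if_neg (fun h => hc (hcond.1 h)), if_neg hc]; ring

lemma inner_sum_l (hΦ : ∀ p ∈ J, p.1 < p.2)
    (hcl : ∀ i j k : Fin n, (i, j) ∈ J → (j, k) ∈ J → (i, k) ∈ J)
    (θ : AddChar F ℂ) (hθ : θ ≠ 1)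
    {C g : Matrix (Fin n) (Fin n) F} (hC : C ∈ patternV J) (hg : g ∈ patternU J) :
    ∑ v ∈ UFin J, θ (dpair (rAct J C v) (g⁻¹ - 1))
      = ((VFin J (F := F)).card : ℂ) *
        (if projJ J ((g⁻¹)ᵀ * C) = C then θ (dpair C (g⁻¹ - 1)) else 0) := by
  have hgi : g⁻¹ ∈ patternU J := U_inv_mem J hΦ hcl hg
  have hY : g⁻¹ - 1 ∈ patternV J := (mem_U_iff_sub J hΦ).1 hgi
  have hstep : ∀ v : Matrix (Fin n) (Fin n) F,
      θ (dpair (rAct J C v) (g⁻¹ - 1))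
        = θ (dpair C (g⁻¹ - 1)) * θ (dpair ((g⁻¹ - 1)ᵀ * C) (v⁻¹ - 1)) := by
    intro v
    rw [← AddChar.map_add_eq_mul]
    congr 1
    rw [rAct, dpair_projJ_left J _ _ hY, KR_r]
  rw [Finset.sum_congr rfl (fun v _ => hstep v), ← Finset.mul_sum]
  have hre : ∑ v ∈ UFin J, θ (dpair ((g⁻¹ - 1)ᵀ * C) (v⁻¹ - 1))
      = ∑ N ∈ VFin J, θ (dpair ((g⁻¹ - 1)ᵀ * C) N) :=
    sum_U_inv_sub J hΦ hcl (fun N => θ (dpair ((g⁻¹ - 1)ᵀ * C) N))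
  rw [hre, sum_theta J θ hθ]
  have hcond : (projJ J ((g⁻¹ - 1)ᵀ * C) = 0) ↔ (projJ J ((g⁻¹)ᵀ * C) = C) := by
    have hexp : (g⁻¹ - 1)ᵀ * C = (g⁻¹)ᵀ * C - C := by
      rw [Matrix.transpose_sub, Matrix.transpose_one, Matrix.sub_mul, Matrix.one_mul]
    rw [hexp, projJ_sub, projJ_eq_self J hC, sub_eq_zero]
  by_cases hc : projJ J ((g⁻¹)ᵀ * C) = C
  · rw [if_pos (hcond.2 hc), if_pos hc]; ring
  · rw [if_neg (fun h => hc (hcond.1 h)), if_neg hc]; ring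


def orbRFin (J : Set (Fin n × Fin n)) (A : Matrix (Fin n) (Fin n) F) :
    Finset (Matrix (Fin n) (Fin n) F) :=
  (Set.toFinite (orbR J A)).toFinset

def orbLFin (J : Set (Fin n × Fin n)) (A : Matrix (Fin n) (Fin n) F) :
    Finset (Matrix (Fin n) (Fin n) F) :=
  (Set.toFinite (orbL J A)).toFinset

lemma mem_orbRFin {A B : Matrix (Fin n) (Fin n) F} : B ∈ orbRFin J A ↔ B ∈ orbR J A :=
  Set.Finite.mem_toFinset _

lemma mem_orbLFin {A B : Matrix (Fin n) (Fin n) F} : B ∈ orbLFin J A ↔ B ∈ orbL J A :=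
  Set.Finite.mem_toFinset _

lemma rchar_eq_sum (θ : AddChar F ℂ) (A g : Matrix (Fin n) (Fin n) F) :
    rcharFn J θ A g
      = ∑ B ∈ orbRFin J A, if projJ J (B * (g⁻¹)ᵀ) = B then θ (dpair B (g⁻¹ - 1)) else 0 := by
  rw [rcharFn, ← Set.Finite.coe_toFinset (Set.toFinite (orbR J A)), finsum_mem_coe_finset]
  rfl

lemma lchar_eq_sum (θ : AddChar F ℂ) (A g : Matrix (Fin n) (Fin n) F) :
    lcharFn J θ A g
      = ∑ B ∈ orbLFin J A, if projJ J ((g⁻¹)ᵀ * B) = B then θ (dpair B (g⁻¹ - 1)) else 0 := by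
  rw [lcharFn, ← Set.Finite.coe_toFinset (Set.toFinite (orbL J A)), finsum_mem_coe_finset]
  rfl

/-- The summand of the right character is invariant under acting on the left. -/
lemma summand_lAct (hΦ : ∀ p ∈ J, p.1 < p.2)
    (hcl : ∀ i j k : Fin n, (i, j) ∈ J → (j, k) ∈ J → (i, k) ∈ J)
    (θ : AddChar F ℂ) {C u g : Matrix (Fin n) (Fin n) F}
    (hC : C ∈ patternV J) (hu : u ∈ patternU J) (hg : g ∈ patternU J) :
    (if projJ J ((lAct J u C) * (g⁻¹)ᵀ) = lAct J u C
        then θ (dpair (lAct J u C) (g⁻¹ - 1)) else 0)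
      = (if projJ J (C * (g⁻¹)ᵀ) = C then θ (dpair C (g⁻¹ - 1)) else 0) := by
  have hgi : g⁻¹ ∈ patternU J := U_inv_mem J hΦ hcl hg
  have hY : g⁻¹ - 1 ∈ patternV J := (mem_U_iff_sub J hΦ).1 hgi
  have huinv : u⁻¹ - 1 ∈ patternV J := (mem_U_iff_sub J hΦ).1 (U_inv_mem J hΦ hcl hu)
  have hcond : projJ J ((lAct J u C) * (g⁻¹)ᵀ) = lAct J u C ↔ projJ J (C * (g⁻¹)ᵀ) = C := by
    have h1 : projJ J ((lAct J u C) * (g⁻¹)ᵀ) = rAct J (lAct J u C) g := rfl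
    have h2 : rAct J (lAct J u C) g = lAct J u (rAct J C g) :=
      (lAct_rAct_comm J hΦ hcl C hu hg).symm
    rw [h1, h2]
    constructor
    · intro h
      have h3 := congrArg (fun X => lAct J u⁻¹ X) h
      exact (by simpa [lAct_cancel J hΦ hcl (rAct_mem_V) hu, lAct_cancel J hΦ hcl hC hu] using h3 : rAct J C g = C)
    · intro h
      show lAct J u (rAct J C g) = lAct J u C
      rw [show rAct J C g = projJ J (C * (g⁻¹)ᵀ) from rfl, h]
  by_cases hfix : projJ J (C * (g⁻¹)ᵀ) = C
  · rw [if_pos (hcond.2 hfix), if_pos hfix]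
    congr 1
    rw [lAct, dpair_projJ_left J _ _ hY, KR_l]
    have hzero : dpair (C * (g⁻¹ - 1)ᵀ) (u⁻¹ - 1) = 0 := by
      have hexp : C * (g⁻¹ - 1)ᵀ = C * (g⁻¹)ᵀ - C := by
        rw [Matrix.transpose_sub, Matrix.transpose_one, Matrix.mul_sub, Matrix.mul_one]
      rw [← dpair_projJ_left J _ _ huinv, hexp, projJ_sub, projJ_eq_self J hC, hfix, sub_self,
        dpair_zero_left]
    rw [hzero, add_zero]
  · rw [if_neg (fun h => hfix (hcond.1 h)), if_neg hfix]

/-- The summand of the left character is invariant under acting on the right. -/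
lemma summand_rAct (hΦ : ∀ p ∈ J, p.1 < p.2)
    (hcl : ∀ i j k : Fin n, (i, j) ∈ J → (j, k) ∈ J → (i, k) ∈ J)
    (θ : AddChar F ℂ) {C v g : Matrix (Fin n) (Fin n) F}
    (hC : C ∈ patternV J) (hv : v ∈ patternU J) (hg : g ∈ patternU J) :
    (if projJ J ((g⁻¹)ᵀ * rAct J C v) = rAct J C v
        then θ (dpair (rAct J C v) (g⁻¹ - 1)) else 0)
      = (if projJ J ((g⁻¹)ᵀ * C) = C then θ (dpair C (g⁻¹ - 1)) else 0) := by
  have hgi : g⁻¹ ∈ patternU J := U_inv_mem J hΦ hcl hg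
  have hY : g⁻¹ - 1 ∈ patternV J := (mem_U_iff_sub J hΦ).1 hgi
  have hvinv : v⁻¹ - 1 ∈ patternV J := (mem_U_iff_sub J hΦ).1 (U_inv_mem J hΦ hcl hv)
  have hcond : projJ J ((g⁻¹)ᵀ * rAct J C v) = rAct J C v ↔ projJ J ((g⁻¹)ᵀ * C) = C := by
    have h1 : projJ J ((g⁻¹)ᵀ * rAct J C v) = lAct J g (rAct J C v) := rfl
    have h2 : lAct J g (rAct J C v) = rAct J (lAct J g C) v :=
      lAct_rAct_comm J hΦ hcl C hg hv
    rw [h1, h2]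
    constructor
    · intro h
      have h3 := congrArg (fun X => rAct J X v⁻¹) h
      exact (by simpa [rAct_cancel J hΦ hcl (lAct_mem_V) hv, rAct_cancel J hΦ hcl hC hv] using h3 : lAct J g C = C)
    · intro h
      show rAct J (lAct J g C) v = rAct J C v
      rw [show lAct J g C = projJ J ((g⁻¹)ᵀ * C) from rfl, h]
  by_cases hfix : projJ J ((g⁻¹)ᵀ * C) = C
  · rw [if_pos (hcond.2 hfix), if_pos hfix]
    congr 1
    rw [rAct, dpair_projJ_left J _ _ hY, KR_r]
    have hzero : dpair ((g⁻¹ - 1)ᵀ * C) (v⁻¹ - 1) = 0 := by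
      have hexp : (g⁻¹ - 1)ᵀ * C = (g⁻¹)ᵀ * C - C := by
        rw [Matrix.transpose_sub, Matrix.transpose_one, Matrix.sub_mul, Matrix.one_mul]
      rw [← dpair_projJ_left J _ _ hvinv, hexp, projJ_sub, projJ_eq_self J hC, hfix, sub_self,
        dpair_zero_left]
    rw [hzero, add_zero]
  · rw [if_neg (fun h => hfix (hcond.1 h)), if_neg hfix]

lemma rchar_rAct (hΦ : ∀ p ∈ J, p.1 < p.2)
    (hcl : ∀ i j k : Fin n, (i, j) ∈ J → (j, k) ∈ J → (i, k) ∈ J)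
    (θ : AddChar F ℂ) {A v : Matrix (Fin n) (Fin n) F} (hv : v ∈ patternU J)
    (g : Matrix (Fin n) (Fin n) F) :
    rcharFn J θ (rAct J A v) g = rcharFn J θ A g := by
  unfold rcharFn
  rw [orbR_eq_of_mem J hΦ hcl (C := rAct J A v) ⟨v, hv, rfl⟩]

lemma lchar_lAct (hΦ : ∀ p ∈ J, p.1 < p.2)
    (hcl : ∀ i j k : Fin n, (i, j) ∈ J → (j, k) ∈ J → (i, k) ∈ J)
    (θ : AddChar F ℂ) {A u : Matrix (Fin n) (Fin n) F} (hu : u ∈ patternU J)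
    (g : Matrix (Fin n) (Fin n) F) :
    lcharFn J θ (lAct J u A) g = lcharFn J θ A g := by
  unfold lcharFn
  rw [orbL_eq_of_mem J hΦ hcl (C := lAct J u A) ⟨u, hu, rfl⟩]

lemma rchar_lAct (hΦ : ∀ p ∈ J, p.1 < p.2)
    (hcl : ∀ i j k : Fin n, (i, j) ∈ J → (j, k) ∈ J → (i, k) ∈ J)
    (θ : AddChar F ℂ) {A u g : Matrix (Fin n) (Fin n) F}
    (hA : A ∈ patternV J) (hu : u ∈ patternU J) (hg : g ∈ patternU J) :
    rcharFn J θ (lAct J u A) g = rcharFn J θ A g := by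
  rw [rchar_eq_sum, rchar_eq_sum]
  apply Finset.sum_nbij' (i := fun D => lAct J u⁻¹ D) (j := fun C => lAct J u C)
  · intro D hD
    rw [mem_orbRFin] at hD ⊢
    obtain ⟨w, hw, rfl⟩ := hD
    have h1 : rAct J (lAct J u A) w = lAct J u (rAct J A w) :=
      (lAct_rAct_comm J hΦ hcl A hu hw).symm
    show lAct J u⁻¹ (rAct J (lAct J u A) w) ∈ orbR J A
    rw [h1, lAct_cancel J hΦ hcl rAct_mem_V hu]
    exact ⟨w, hw, rfl⟩
  · intro C hC
    rw [mem_orbRFin] at hC ⊢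
    obtain ⟨w, hw, rfl⟩ := hC
    show lAct J u (rAct J A w) ∈ orbR J (lAct J u A)
    rw [lAct_rAct_comm J hΦ hcl A hu hw]
    exact ⟨w, hw, rfl⟩
  · intro D hD
    rw [mem_orbRFin] at hD
    exact lAct_cancel' J hΦ hcl (orbR_subset_V J hD) hu
  · intro C hC
    rw [mem_orbRFin] at hC
    exact lAct_cancel J hΦ hcl (orbR_subset_V J hC) hu
  · intro D hD
    rw [mem_orbRFin] at hD
    have hDV : D ∈ patternV J := orbR_subset_V J hD
    have hD' : D = lAct J u (lAct J u⁻¹ D) := (lAct_cancel' J hΦ hcl hDV hu).symm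
    calc (if projJ J (D * (g⁻¹)ᵀ) = D then θ (dpair D (g⁻¹ - 1)) else 0)
        = (if projJ J ((lAct J u (lAct J u⁻¹ D)) * (g⁻¹)ᵀ) = lAct J u (lAct J u⁻¹ D)
            then θ (dpair (lAct J u (lAct J u⁻¹ D)) (g⁻¹ - 1)) else 0) := by rw [← hD']
      _ = (if projJ J ((lAct J u⁻¹ D) * (g⁻¹)ᵀ) = lAct J u⁻¹ D
            then θ (dpair (lAct J u⁻¹ D) (g⁻¹ - 1)) else 0) :=
        summand_lAct J hΦ hcl θ lAct_mem_V hu hg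

lemma lchar_rAct (hΦ : ∀ p ∈ J, p.1 < p.2)
    (hcl : ∀ i j k : Fin n, (i, j) ∈ J → (j, k) ∈ J → (i, k) ∈ J)
    (θ : AddChar F ℂ) {A v g : Matrix (Fin n) (Fin n) F}
    (hA : A ∈ patternV J) (hv : v ∈ patternU J) (hg : g ∈ patternU J) :
    lcharFn J θ (rAct J A v) g = lcharFn J θ A g := by
  rw [lchar_eq_sum, lchar_eq_sum]
  apply Finset.sum_nbij' (i := fun D => rAct J D v⁻¹) (j := fun C => rAct J C v)
  · intro D hD
    rw [mem_orbLFin] at hD ⊢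
    obtain ⟨w, hw, rfl⟩ := hD
    have h1 : lAct J w (rAct J A v) = rAct J (lAct J w A) v :=
      lAct_rAct_comm J hΦ hcl A hw hv
    show rAct J (lAct J w (rAct J A v)) v⁻¹ ∈ orbL J A
    rw [h1, rAct_cancel J hΦ hcl lAct_mem_V hv]
    exact ⟨w, hw, rfl⟩
  · intro C hC
    rw [mem_orbLFin] at hC ⊢
    obtain ⟨w, hw, rfl⟩ := hC
    show rAct J (lAct J w A) v ∈ orbL J (rAct J A v)
    rw [← lAct_rAct_comm J hΦ hcl A hw hv]
    exact ⟨w, hw, rfl⟩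
  · intro D hD
    rw [mem_orbLFin] at hD
    have hDV : D ∈ patternV J := orbL_subset_V J hD
    rw [rAct_comp J hΦ hcl D (U_inv_mem J hΦ hcl hv) hv, U_inv_mul J hΦ hcl hv, rAct_one J hDV]
  · intro C hC
    rw [mem_orbLFin] at hC
    exact rAct_cancel J hΦ hcl (orbL_subset_V J hC) hv
  · intro D hD
    rw [mem_orbLFin] at hD
    have hDV : D ∈ patternV J := orbL_subset_V J hD
    have hD' : D = rAct J (rAct J D v⁻¹) v := by
      rw [rAct_comp J hΦ hcl D (U_inv_mem J hΦ hcl hv) hv, U_inv_mul J hΦ hcl hv,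
        rAct_one J hDV]
    calc (if projJ J ((g⁻¹)ᵀ * D) = D then θ (dpair D (g⁻¹ - 1)) else 0)
        = (if projJ J ((g⁻¹)ᵀ * rAct J (rAct J D v⁻¹) v) = rAct J (rAct J D v⁻¹) v
            then θ (dpair (rAct J (rAct J D v⁻¹) v) (g⁻¹ - 1)) else 0) := by rw [← hD']
      _ = (if projJ J ((g⁻¹)ᵀ * rAct J D v⁻¹) = rAct J D v⁻¹
            then θ (dpair (rAct J D v⁻¹) (g⁻¹ - 1)) else 0) :=
        summand_rAct J hΦ hcl θ rAct_mem_V hv hg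

lemma rchar_eq_of_mem_orbBi (hΦ : ∀ p ∈ J, p.1 < p.2)
    (hcl : ∀ i j k : Fin n, (i, j) ∈ J → (j, k) ∈ J → (i, k) ∈ J)
    (θ : AddChar F ℂ) {A X g : Matrix (Fin n) (Fin n) F}
    (hA : A ∈ patternV J) (hX : X ∈ orbBi J A) (hg : g ∈ patternU J) :
    rcharFn J θ X g = rcharFn J θ A g := by
  obtain ⟨u, hu, v, hv, rfl⟩ := hX
  show rcharFn J θ (lAct J u (rAct J A v)) g = rcharFn J θ A g
  rw [rchar_lAct J hΦ hcl θ rAct_mem_V hu hg, rchar_rAct J hΦ hcl θ hv]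

lemma lchar_eq_of_mem_orbBi (hΦ : ∀ p ∈ J, p.1 < p.2)
    (hcl : ∀ i j k : Fin n, (i, j) ∈ J → (j, k) ∈ J → (i, k) ∈ J)
    (θ : AddChar F ℂ) {A X g : Matrix (Fin n) (Fin n) F}
    (hA : A ∈ patternV J) (hX : X ∈ orbBi J A) (hg : g ∈ patternU J) :
    lcharFn J θ X g = lcharFn J θ A g := by
  obtain ⟨u, hu, v, hv, rfl⟩ := hX
  show lcharFn J θ (lAct J u (rAct J A v)) g = lcharFn J θ A g
  rw [lAct_rAct_comm J hΦ hcl A hu hv,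
    lchar_rAct J hΦ hcl θ lAct_mem_V hv hg, lchar_lAct J hΦ hcl θ hu]

lemma lAct_neg (v D : Matrix (Fin n) (Fin n) F) : lAct J v (-D) = - lAct J v D := by
  unfold lAct
  rw [Matrix.mul_neg, projJ_neg]

lemma rAct_neg (D v : Matrix (Fin n) (Fin n) F) : rAct J (-D) v = - rAct J D v := by
  unfold rAct
  rw [Matrix.neg_mul, projJ_neg]

lemma orth_r (hΦ : ∀ p ∈ J, p.1 < p.2)
    (hcl : ∀ i j k : Fin n, (i, j) ∈ J → (j, k) ∈ J → (i, k) ∈ J)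
    (θ : AddChar F ℂ) (hθ : θ ≠ 1)
    {A B : Matrix (Fin n) (Fin n) F} (hA : A ∈ patternV J) (hB : B ∈ patternV J)
    (hdisj : ∀ X, X ∈ orbBi J A → X ∉ orbBi J B) :
    ∑ g ∈ UFin J, rcharFn J θ A g * (starRingEnd ℂ) (rcharFn J θ B g) = 0 := by
  set c : ℂ := ((VFin J (F := F) (n := n)).card : ℂ) with hcdef
  have hc0 : c ≠ 0 := VFin_card_ne_zero J
  have key : c ^ 2 * ∑ g ∈ UFin J, rcharFn J θ A g * (starRingEnd ℂ) (rcharFn J θ B g) = 0 := by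
    rw [Finset.mul_sum]
    have hper : ∀ g ∈ UFin J,
        c ^ 2 * (rcharFn J θ A g * (starRingEnd ℂ) (rcharFn J θ B g))
          = ∑ C ∈ orbRFin J A, ∑ D ∈ orbRFin J B, ∑ u ∈ UFin J, ∑ v ∈ UFin J,
              θ (dpair (lAct J u C - lAct J v D) (g⁻¹ - 1)) := by
      intro g hgU
      have hg : g ∈ patternU J := (mem_UFin J).1 hgU
      have h1 : c * rcharFn J θ A g
          = ∑ C ∈ orbRFin J A, ∑ u ∈ UFin J, θ (dpair (lAct J u C) (g⁻¹ - 1)) := by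
        rw [rchar_eq_sum, Finset.mul_sum]
        apply Finset.sum_congr rfl
        intro C hC
        rw [inner_sum_r J hΦ hcl θ hθ (orbR_subset_V J ((mem_orbRFin J).1 hC)) hg]
      have h2 : c * (starRingEnd ℂ) (rcharFn J θ B g)
          = ∑ D ∈ orbRFin J B, ∑ v ∈ UFin J, θ (- dpair (lAct J v D) (g⁻¹ - 1)) := by
        rw [rchar_eq_sum, map_sum, Finset.mul_sum]
        apply Finset.sum_congr rfl
        intro D hD
        have hDV : D ∈ patternV J := orbR_subset_V J ((mem_orbRFin J).1 hD)
        have hDV' : -D ∈ patternV J := V_neg J hDV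
        have hcnd : (projJ J ((-D) * (g⁻¹)ᵀ) = -D) ↔ (projJ J (D * (g⁻¹)ᵀ) = D) := by
          rw [Matrix.neg_mul, projJ_neg, neg_inj]
        have hconj : (starRingEnd ℂ)
              (if projJ J (D * (g⁻¹)ᵀ) = D then θ (dpair D (g⁻¹ - 1)) else 0)
            = if projJ J ((-D) * (g⁻¹)ᵀ) = -D then θ (dpair (-D) (g⁻¹ - 1)) else 0 := by
          by_cases hp : projJ J (D * (g⁻¹)ᵀ) = D
          · rw [if_pos hp, if_pos (hcnd.2 hp), dpair_neg_left, AddChar.map_neg_eq_conj]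
          · rw [if_neg hp, if_neg (fun h => hp (hcnd.1 h)), map_zero]
        rw [hconj, ← inner_sum_r J hΦ hcl θ hθ hDV' hg]
        apply Finset.sum_congr rfl
        intro v _
        rw [lAct_neg, dpair_neg_left]
      calc c ^ 2 * (rcharFn J θ A g * (starRingEnd ℂ) (rcharFn J θ B g))
          = (c * rcharFn J θ A g) * (c * (starRingEnd ℂ) (rcharFn J θ B g)) := by ring
        _ = (∑ C ∈ orbRFin J A, ∑ u ∈ UFin J, θ (dpair (lAct J u C) (g⁻¹ - 1)))
            * (∑ D ∈ orbRFin J B, ∑ v ∈ UFin J, θ (- dpair (lAct J v D) (g⁻¹ - 1))) := by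
            rw [h1, h2]
        _ = ∑ C ∈ orbRFin J A, ∑ D ∈ orbRFin J B, ∑ u ∈ UFin J, ∑ v ∈ UFin J,
              θ (dpair (lAct J u C - lAct J v D) (g⁻¹ - 1)) := by
            rw [Finset.sum_mul_sum]
            apply Finset.sum_congr rfl
            intro C _
            apply Finset.sum_congr rfl
            intro D _
            rw [Finset.sum_mul_sum]
            apply Finset.sum_congr rfl
            intro u _
            apply Finset.sum_congr rfl
            intro v _
            rw [← AddChar.map_add_eq_mul, dpair_sub_left]
            congr 1
            ring
    rw [Finset.sum_congr rfl hper]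
    rw [Finset.sum_comm]
    apply Finset.sum_eq_zero
    intro C hC
    rw [Finset.sum_comm]
    apply Finset.sum_eq_zero
    intro D hD
    rw [Finset.sum_comm]
    apply Finset.sum_eq_zero
    intro u hu
    rw [Finset.sum_comm]
    apply Finset.sum_eq_zero
    intro v hv
    rw [sum_U_inv_sub J hΦ hcl (fun N => θ (dpair (lAct J u C - lAct J v D) N)),
      sum_theta J θ hθ, if_neg]
    intro habs
    have hMV : lAct J u C - lAct J v D ∈ patternV J :=
      V_sub J lAct_mem_V lAct_mem_V
    have hM0 : lAct J u C = lAct J v D := by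
      have := (projJ_eq_self J hMV).symm.trans habs
      exact sub_eq_zero.mp this
    have hmemA : lAct J u C ∈ orbBi J A :=
      lAct_mem_orbBi J hΦ hcl ((mem_orbRFin J).1 hC) ((mem_UFin J).1 hu)
    have hmemB : lAct J v D ∈ orbBi J B :=
      lAct_mem_orbBi J hΦ hcl ((mem_orbRFin J).1 hD) ((mem_UFin J).1 hv)
    rw [hM0] at hmemA
    exact hdisj _ hmemA hmemB
  rcases mul_eq_zero.mp key with h | h
  · exact absurd h (pow_ne_zero 2 hc0)
  · exact h

lemma orth_l (hΦ : ∀ p ∈ J, p.1 < p.2)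
    (hcl : ∀ i j k : Fin n, (i, j) ∈ J → (j, k) ∈ J → (i, k) ∈ J)
    (θ : AddChar F ℂ) (hθ : θ ≠ 1)
    {A B : Matrix (Fin n) (Fin n) F} (hA : A ∈ patternV J) (hB : B ∈ patternV J)
    (hdisj : ∀ X, X ∈ orbBi J A → X ∉ orbBi J B) :
    ∑ g ∈ UFin J, lcharFn J θ A g * (starRingEnd ℂ) (lcharFn J θ B g) = 0 := by
  set c : ℂ := ((VFin J (F := F) (n := n)).card : ℂ) with hcdef
  have hc0 : c ≠ 0 := VFin_card_ne_zero J
  have key : c ^ 2 * ∑ g ∈ UFin J, lcharFn J θ A g * (starRingEnd ℂ) (lcharFn J θ B g) = 0 := by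
    rw [Finset.mul_sum]
    have hper : ∀ g ∈ UFin J,
        c ^ 2 * (lcharFn J θ A g * (starRingEnd ℂ) (lcharFn J θ B g))
          = ∑ C ∈ orbLFin J A, ∑ D ∈ orbLFin J B, ∑ u ∈ UFin J, ∑ v ∈ UFin J,
              θ (dpair (rAct J C u - rAct J D v) (g⁻¹ - 1)) := by
      intro g hgU
      have hg : g ∈ patternU J := (mem_UFin J).1 hgU
      have h1 : c * lcharFn J θ A g
          = ∑ C ∈ orbLFin J A, ∑ u ∈ UFin J, θ (dpair (rAct J C u) (g⁻¹ - 1)) := by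
        rw [lchar_eq_sum, Finset.mul_sum]
        apply Finset.sum_congr rfl
        intro C hC
        rw [inner_sum_l J hΦ hcl θ hθ (orbL_subset_V J ((mem_orbLFin J).1 hC)) hg]
      have h2 : c * (starRingEnd ℂ) (lcharFn J θ B g)
          = ∑ D ∈ orbLFin J B, ∑ v ∈ UFin J, θ (- dpair (rAct J D v) (g⁻¹ - 1)) := by
        rw [lchar_eq_sum, map_sum, Finset.mul_sum]
        apply Finset.sum_congr rfl
        intro D hD
        have hDV : D ∈ patternV J := orbL_subset_V J ((mem_orbLFin J).1 hD)
        have hDV' : -D ∈ patternV J := V_neg J hDV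
        have hcnd : (projJ J ((g⁻¹)ᵀ * (-D)) = -D) ↔ (projJ J ((g⁻¹)ᵀ * D) = D) := by
          rw [Matrix.mul_neg, projJ_neg, neg_inj]
        have hconj : (starRingEnd ℂ)
              (if projJ J ((g⁻¹)ᵀ * D) = D then θ (dpair D (g⁻¹ - 1)) else 0)
            = if projJ J ((g⁻¹)ᵀ * (-D)) = -D then θ (dpair (-D) (g⁻¹ - 1)) else 0 := by
          by_cases hp : projJ J ((g⁻¹)ᵀ * D) = D
          · rw [if_pos hp, if_pos (hcnd.2 hp), dpair_neg_left, AddChar.map_neg_eq_conj]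
          · rw [if_neg hp, if_neg (fun h => hp (hcnd.1 h)), map_zero]
        rw [hconj, ← inner_sum_l J hΦ hcl θ hθ hDV' hg]
        apply Finset.sum_congr rfl
        intro v _
        rw [rAct_neg, dpair_neg_left]
      calc c ^ 2 * (lcharFn J θ A g * (starRingEnd ℂ) (lcharFn J θ B g))
          = (c * lcharFn J θ A g) * (c * (starRingEnd ℂ) (lcharFn J θ B g)) := by ring
        _ = (∑ C ∈ orbLFin J A, ∑ u ∈ UFin J, θ (dpair (rAct J C u) (g⁻¹ - 1)))
            * (∑ D ∈ orbLFin J B, ∑ v ∈ UFin J, θ (- dpair (rAct J D v) (g⁻¹ - 1))) := by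
            rw [h1, h2]
        _ = ∑ C ∈ orbLFin J A, ∑ D ∈ orbLFin J B, ∑ u ∈ UFin J, ∑ v ∈ UFin J,
              θ (dpair (rAct J C u - rAct J D v) (g⁻¹ - 1)) := by
            rw [Finset.sum_mul_sum]
            apply Finset.sum_congr rfl
            intro C _
            apply Finset.sum_congr rfl
            intro D _
            rw [Finset.sum_mul_sum]
            apply Finset.sum_congr rfl
            intro u _
            apply Finset.sum_congr rfl
            intro v _
            rw [← AddChar.map_add_eq_mul, dpair_sub_left]
            congr 1
            ring
    rw [Finset.sum_congr rfl hper]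
    rw [Finset.sum_comm]
    apply Finset.sum_eq_zero
    intro C hC
    rw [Finset.sum_comm]
    apply Finset.sum_eq_zero
    intro D hD
    rw [Finset.sum_comm]
    apply Finset.sum_eq_zero
    intro u hu
    rw [Finset.sum_comm]
    apply Finset.sum_eq_zero
    intro v hv
    rw [sum_U_inv_sub J hΦ hcl (fun N => θ (dpair (rAct J C u - rAct J D v) N)),
      sum_theta J θ hθ, if_neg]
    intro habs
    have hMV : rAct J C u - rAct J D v ∈ patternV J :=
      V_sub J rAct_mem_V rAct_mem_V
    have hM0 : rAct J C u = rAct J D v := by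
      have := (projJ_eq_self J hMV).symm.trans habs
      exact sub_eq_zero.mp this
    have hmemA : rAct J C u ∈ orbBi J A :=
      rAct_mem_orbBi J hΦ hcl ((mem_orbLFin J).1 hC) ((mem_UFin J).1 hu)
    have hmemB : rAct J D v ∈ orbBi J B :=
      rAct_mem_orbBi J hΦ hcl ((mem_orbLFin J).1 hD) ((mem_UFin J).1 hv)
    rw [hM0] at hmemA
    exact hdisj _ hmemA hmemB
  rcases mul_eq_zero.mp key with h | h
  · exact absurd h (pow_ne_zero 2 hc0)
  · exact h

lemma finsum_U_eq (f : Matrix (Fin n) (Fin n) F → ℂ) :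
    (∑ᶠ g ∈ patternU J, f g) = ∑ g ∈ UFin J, f g := by
  rw [← Set.Finite.coe_toFinset (Set.toFinite (patternU J)), finsum_mem_coe_finset]
  rfl

end Stmt11Aux

/-- For J ⊆ Φ⁺ closed and A, B ∈ V_J, either ℂO_A^r ≅ ℂO_B^r and
ℂO_A^l ≅ ℂO_B^l as ℂU_J-modules, or else they are disjoint.  Since ℂU_J is semisimple,
isomorphism of modules is equivalent to equality of the characters they afford, and
disjointness is equivalent to orthogonality of these characters, so the statement reads:
either the right (resp. left) orbit characters of A and B agree on U_J, or both the right
and the left orbit characters of A and B are orthogonal. -/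
theorem stmt_11 {F : Type} [Field F] [Fintype F] {n : ℕ}
    (J : Set (Fin n × Fin n))
    (hΦ : ∀ p ∈ J, p.1 < p.2)
    (hcl : ∀ i j k : Fin n, (i, j) ∈ J → (j, k) ∈ J → (i, k) ∈ J)
    (θ : AddChar F ℂ) (hθ : θ ≠ 1)
    (A B : Matrix (Fin n) (Fin n) F) (hA : A ∈ patternV J) (hB : B ∈ patternV J) :
    ((∀ g ∈ patternU J, rcharFn J θ A g = rcharFn J θ B g) ∧
     (∀ g ∈ patternU J, lcharFn J θ A g = lcharFn J θ B g)) ∨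
    ((∑ᶠ g ∈ patternU J, rcharFn J θ A g * (starRingEnd ℂ) (rcharFn J θ B g)) = 0 ∧
     (∑ᶠ g ∈ patternU J, lcharFn J θ A g * (starRingEnd ℂ) (lcharFn J θ B g)) = 0) := by
  classical
  classical
  by_cases hX : ∃ X, X ∈ orbBi J A ∧ X ∈ orbBi J B
  · left
    obtain ⟨X, hXA, hXB⟩ := hX
    constructor
    · intro g hg
      rw [← Stmt11Aux.rchar_eq_of_mem_orbBi J hΦ hcl θ hA hXA hg,
        Stmt11Aux.rchar_eq_of_mem_orbBi J hΦ hcl θ hB hXB hg]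
    · intro g hg
      rw [← Stmt11Aux.lchar_eq_of_mem_orbBi J hΦ hcl θ hA hXA hg,
        Stmt11Aux.lchar_eq_of_mem_orbBi J hΦ hcl θ hB hXB hg]
  · right
    push_neg at hX
    constructor
    · rw [Stmt11Aux.finsum_U_eq J]
      exact Stmt11Aux.orth_r J hΦ hcl θ hθ hA hB hX
    · rw [Stmt11Aux.finsum_U_eq J]
      exact Stmt11Aux.orth_l J hΦ hcl θ hθ hA hB hX
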